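/- If A ⊆ ℝ is Lebesgue measurable with μ(A) > 0, then A contains an element of the family 𝓛. -/

import Mathlib

open Set Filter MeasureTheory

/-- The family `𝓛` of all nonempty Lebesgue measurable sets `K ⊆ ℝ` such that every open
set meeting `K` does so in positive Lebesgue measure. -/
def MemCalL (K : Set ℝ) : Prop :=
  K.Nonempty ∧ NullMeasurableSet K volume ∧
    ∀ U : Set ℝ, IsOpen U → (K ∩ U = ∅ ∨ 0 < volume (K ∩ U))

/-- Proposition 6: every Lebesgue measurable set of positive measure contains
an element of `𝓛`. -/
theorem stmt_8 (A : Set ℝ) (hA : NullMeasurableSet A volume) (hpos : 0 < volume A) :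
    ∃ K : Set ℝ, MemCalL K ∧ K ⊆ A := by
  classical
  -- union of all rational intervals meeting A in measure zero
  set W : Set ℝ := ⋃ (pq : ℚ × ℚ) (_ : volume (A ∩ Ioo (pq.1 : ℝ) (pq.2 : ℝ)) = 0),
      Ioo (pq.1 : ℝ) (pq.2 : ℝ) with hW
  have hWopen : IsOpen W := isOpen_iUnion fun pq => isOpen_iUnion fun _ => isOpen_Ioo
  have hAW : volume (A ∩ W) = 0 := by
    rw [hW, inter_iUnion]
    refine measure_iUnion_null fun pq => ?_
    rw [inter_iUnion]
    exact measure_iUnion_null fun h => h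
  set K : Set ℝ := A \ W with hK
  have hKA : K ⊆ A := diff_subset
  have hKmeas : NullMeasurableSet K volume :=
    hA.diff hWopen.measurableSet.nullMeasurableSet
  have hKvol : volume K = volume A := by
    have : K = A \ (A ∩ W) := by rw [hK]; ext x; simp only [mem_diff, mem_inter_iff, not_and]; tauto
    rw [this, measure_diff_null hAW]
  have hKne : K.Nonempty := nonempty_of_measure_ne_zero (by rw [hKvol]; exact hpos.ne')
  refine ⟨K, ⟨hKne, hKmeas, ?_⟩, hKA⟩
  intro U hU
  rcases eq_empty_or_nonempty (K ∩ U) with h | ⟨x, hxK, hxU⟩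
  · exact Or.inl h
  right
  -- find a rational interval around x inside U
  obtain ⟨ε, hε, hball⟩ := Metric.isOpen_iff.1 hU x hxU
  obtain ⟨p, hp1, hp2⟩ := exists_rat_btwn (show x - ε < x by linarith)
  obtain ⟨q, hq1, hq2⟩ := exists_rat_btwn (show x < x + ε by linarith)
  have hxI : x ∈ Ioo (p : ℝ) (q : ℝ) := ⟨hp2, hq1⟩
  have hIU : Ioo (p : ℝ) (q : ℝ) ⊆ U := by
    intro y hy
    apply hball
    rw [Metric.mem_ball, Real.dist_eq, abs_lt]
    cases hy with
    | intro h1 h2 => constructor <;> linarith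
  -- x ∉ W, so the interval has positive A-measure
  have hxnW : x ∉ W := hxK.2
  have hpos' : volume (A ∩ Ioo (p : ℝ) (q : ℝ)) ≠ 0 := by
    intro h0
    exact hxnW (mem_iUnion.2 ⟨(p, q), mem_iUnion.2 ⟨h0, hxI⟩⟩)
  have hKI : 0 < volume (K ∩ Ioo (p : ℝ) (q : ℝ)) := by
    rcases eq_or_ne (volume (K ∩ Ioo (p : ℝ) (q : ℝ))) 0 with h0 | h0
    · exfalso
      apply hpos'
      refine le_antisymm ?_ zero_le
      have hsub : A ∩ Ioo (p : ℝ) (q : ℝ) ⊆ (K ∩ Ioo (p : ℝ) (q : ℝ)) ∪ (A ∩ W) := by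
        intro y ⟨hyA, hyI⟩
        by_cases hyW : y ∈ W
        · exact Or.inr ⟨hyA, hyW⟩
        · exact Or.inl ⟨⟨hyA, hyW⟩, hyI⟩
      calc volume (A ∩ Ioo (p : ℝ) (q : ℝ)) ≤ volume ((K ∩ Ioo (p : ℝ) (q : ℝ)) ∪ (A ∩ W)) :=
            measure_mono hsub
        _ ≤ volume (K ∩ Ioo (p : ℝ) (q : ℝ)) + volume (A ∩ W) := measure_union_le _ _
        _ = 0 := by rw [h0, hAW, add_zero]
    · exact h0.bot_lt
  exact hKI.trans_le (measure_mono (inter_subset_inter_right _ hIU))
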